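/- If K ⊆ ℝ² is a Borel set with dim_H(K) = 0, then K is flat (not curved). -/

import Mathlib

open MeasureTheory
open scoped ENNReal NNReal

/-- The area of the triangle spanned by three points of `ℝ²`. -/
noncomputable def triArea (p₁ p₂ p₃ : ℝ × ℝ) : ℝ :=
  |(p₂.1 - p₁.1) * (p₃.2 - p₁.2) - (p₂.2 - p₁.2) * (p₃.1 - p₁.1)| / 2

/-- A set `K ⊆ ℝ²` is *curved* if there exist `β > 0`, `C > 0` and a Borel probability
measure `μ` supported on `K` such that for all `r > 0`,
`μ³({(p₁,p₂,p₃) ∈ K³ : |T(p₁,p₂,p₃)| < r}) ≤ C r^β`. -/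
def IsCurved (K : Set (ℝ × ℝ)) : Prop :=
  ∃ (β C : ℝ) (μ : Measure (ℝ × ℝ)), 0 < β ∧ 0 < C ∧ IsProbabilityMeasure μ ∧ μ Kᶜ = 0 ∧
    ∀ r : ℝ, 0 < r →
      (μ.prod (μ.prod μ))
          {q : (ℝ × ℝ) × (ℝ × ℝ) × (ℝ × ℝ) |
            q.1 ∈ K ∧ q.2.1 ∈ K ∧ q.2.2 ∈ K ∧ triArea q.1 q.2.1 q.2.2 < r}
        ≤ ENNReal.ofReal (C * r ^ β)

/-- If three points lie in a ball of radius `δ`, the triangle they span has area `< 4δ²`. -/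
lemma triArea_lt_of_mem_ball {x p₁ p₂ p₃ : ℝ × ℝ} {δ : ℝ} (hδ : 0 < δ)
    (h₁ : p₁ ∈ Metric.ball x δ) (h₂ : p₂ ∈ Metric.ball x δ) (h₃ : p₃ ∈ Metric.ball x δ) :
    triArea p₁ p₂ p₃ < 4 * δ ^ 2 := by
  have key : ∀ p q : ℝ × ℝ, p ∈ Metric.ball x δ → q ∈ Metric.ball x δ →
      |p.1 - q.1| < 2 * δ ∧ |p.2 - q.2| < 2 * δ := by
    intro p q hp hq
    rw [Metric.mem_ball, Prod.dist_eq, max_lt_iff, Real.dist_eq, Real.dist_eq] at hp hq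
    constructor
    · calc |p.1 - q.1| ≤ |p.1 - x.1| + |x.1 - q.1| := abs_sub_le _ _ _
        _ < δ + δ := by
            have := hq.1; rw [abs_sub_comm] at this; exact add_lt_add hp.1 this
        _ = 2 * δ := by ring
    · calc |p.2 - q.2| ≤ |p.2 - x.2| + |x.2 - q.2| := abs_sub_le _ _ _
        _ < δ + δ := by
            have := hq.2; rw [abs_sub_comm] at this; exact add_lt_add hp.2 this
        _ = 2 * δ := by ring
  obtain ⟨ha, _⟩ := key p₂ p₁ h₂ h₁
  obtain ⟨_, hd⟩ := key p₃ p₁ h₃ h₁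
  obtain ⟨_, hb⟩ := key p₂ p₁ h₂ h₁
  obtain ⟨hc, _⟩ := key p₃ p₁ h₃ h₁
  set a := p₂.1 - p₁.1
  set b := p₂.2 - p₁.2
  set c := p₃.1 - p₁.1
  set d := p₃.2 - p₁.2
  have habs : |a * d - b * c| ≤ |a| * |d| + |b| * |c| := by
    calc |a * d - b * c| ≤ |a * d| + |b * c| := abs_sub _ _
      _ = |a| * |d| + |b| * |c| := by rw [abs_mul, abs_mul]
  have h1 : |a| * |d| < (2 * δ) * (2 * δ) :=
    mul_lt_mul'' ha hd (abs_nonneg _) (abs_nonneg _)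
  have h2 : |b| * |c| < (2 * δ) * (2 * δ) :=
    mul_lt_mul'' hb hc (abs_nonneg _) (abs_nonneg _)
  have : |a * d - b * c| < 8 * δ ^ 2 := by nlinarith
  rw [triArea]
  nlinarith

/-- A Borel set `K ⊆ ℝ²` of Hausdorff dimension zero is flat (not curved). -/
theorem flat_of_dimH_eq_zero (K : Set (ℝ × ℝ)) (hK : MeasurableSet K) (hdim : dimH K = 0) :
    ¬ IsCurved K := by
  rintro ⟨β, C, μ, hβ, hC, hprob, hμK, harea⟩
  haveI := hprob
  -- Step 1: Frostman-type bound on balls.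
  have ball_bound : ∀ (x : ℝ × ℝ) (δ : ℝ), 0 < δ →
      μ (Metric.ball x δ) ^ 3 ≤ ENNReal.ofReal (C * (4 * δ ^ 2) ^ β) := by
    intro x δ hδ
    set A := K ∩ Metric.ball x δ with hA_def
    have hA : MeasurableSet A := hK.inter Metric.isOpen_ball.measurableSet
    have hball : μ (Metric.ball x δ) = μ A := by
      refine le_antisymm ?_ (measure_mono Set.inter_subset_right)
      calc μ (Metric.ball x δ) ≤ μ (A ∪ Kᶜ) := by
            refine measure_mono fun y hy => ?_
            by_cases hyK : y ∈ K
            · exact Or.inl ⟨hyK, hy⟩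
            · exact Or.inr hyK
        _ ≤ μ A + μ Kᶜ := measure_union_le _ _
        _ = μ A := by rw [hμK, add_zero]
    have hsub : (A ×ˢ (A ×ˢ A)) ⊆
        {q : (ℝ × ℝ) × (ℝ × ℝ) × (ℝ × ℝ) |
          q.1 ∈ K ∧ q.2.1 ∈ K ∧ q.2.2 ∈ K ∧ triArea q.1 q.2.1 q.2.2 < 4 * δ ^ 2} := by
      rintro ⟨p₁, p₂, p₃⟩ ⟨⟨h1K, h1b⟩, ⟨h2K, h2b⟩, ⟨h3K, h3b⟩⟩
      exact ⟨h1K, h2K, h3K, triArea_lt_of_mem_ball hδ h1b h2b h3b⟩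
    have hr : (0:ℝ) < 4 * δ ^ 2 := by positivity
    calc μ (Metric.ball x δ) ^ 3 = μ A * (μ A * μ A) := by rw [hball]; ring
      _ = (μ.prod (μ.prod μ)) (A ×ˢ (A ×ˢ A)) := by
          rw [Measure.prod_prod, Measure.prod_prod]
      _ ≤ (μ.prod (μ.prod μ))
          {q : (ℝ × ℝ) × (ℝ × ℝ) × (ℝ × ℝ) |
            q.1 ∈ K ∧ q.2.1 ∈ K ∧ q.2.2 ∈ K ∧ triArea q.1 q.2.1 q.2.2 < 4 * δ ^ 2} :=
          measure_mono hsub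
      _ ≤ ENNReal.ofReal (C * (4 * δ ^ 2) ^ β) := harea _ hr
  -- Step 2: bound on sets of finite diameter.
  set c₁ : ℝ≥0∞ := ENNReal.ofReal (C * 4 ^ β) with hc₁_def
  have hc₁0 : c₁ ≠ 0 := by
    simp only [hc₁_def, ne_eq, ENNReal.ofReal_eq_zero, not_le]
    positivity
  have hc₁top : c₁ ≠ ∞ := ENNReal.ofReal_ne_top
  have set_bound : ∀ s : Set (ℝ × ℝ), s.Nonempty → EMetric.diam s ≤ 1 →
      μ s ^ (3:ℝ) ≤ c₁ * EMetric.diam s ^ (2 * β) := by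
    intro s ⟨x, hx⟩ hs
    have hdiam_top : EMetric.diam s ≠ ∞ := (hs.trans_lt ENNReal.one_lt_top).ne
    set D : ℝ := (EMetric.diam s).toReal with hD_def
    have hD0 : 0 ≤ D := ENNReal.toReal_nonneg
    -- μ s ^ 3 ≤ ofReal (C * (4δ²)^β) for every δ > D
    have key : ∀ δ : ℝ, D < δ → μ s ^ (3:ℝ) ≤ ENNReal.ofReal (C * (4 * δ ^ 2) ^ β) := by
      intro δ hδ
      have hδ0 : 0 < δ := lt_of_le_of_lt hD0 hδ
      have hsub : s ⊆ Metric.ball x δ := by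
        intro y hy
        rw [Metric.mem_ball]
        have : edist y x ≤ EMetric.diam s := EMetric.edist_le_diam_of_mem hy hx
        have := ENNReal.toReal_mono hdiam_top this
        rw [← hD_def] at this
        rw [dist_edist]
        exact lt_of_le_of_lt this hδ
      calc μ s ^ (3:ℝ) ≤ μ (Metric.ball x δ) ^ (3:ℝ) :=
            ENNReal.rpow_le_rpow (measure_mono hsub) (by norm_num)
        _ = μ (Metric.ball x δ) ^ (3:ℕ) := by
            rw [← ENNReal.rpow_natCast]; norm_num
        _ ≤ ENNReal.ofReal (C * (4 * δ ^ 2) ^ β) := ball_bound x δ hδ0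
    -- pass to the limit δ → D⁺
    have hlim : Filter.Tendsto (fun δ : ℝ => ENNReal.ofReal (C * (4 * δ ^ 2) ^ β))
        (nhdsWithin D (Set.Ioi D)) (nhds (ENNReal.ofReal (C * (4 * D ^ 2) ^ β))) := by
      have hcont : ContinuousAt (fun δ : ℝ => ENNReal.ofReal (C * (4 * δ ^ 2) ^ β)) D := by
        apply ENNReal.continuous_ofReal.continuousAt.comp
        apply ContinuousAt.mul continuousAt_const
        show ContinuousAt ((fun y : ℝ => y ^ β) ∘ (fun δ : ℝ => 4 * δ ^ 2)) D
        exact (Real.continuousAt_rpow_const _ _ (Or.inr hβ.le)).comp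
          ((continuous_const.mul (continuous_pow 2)).continuousAt)
      exact hcont.continuousWithinAt.tendsto
    have hmono : μ s ^ (3:ℝ) ≤ ENNReal.ofReal (C * (4 * D ^ 2) ^ β) := by
      refine ge_of_tendsto hlim ?_
      filter_upwards [self_mem_nhdsWithin] with δ hδ
      exact key δ hδ
    -- rewrite RHS
    have hrw : C * (4 * D ^ 2) ^ β = (C * 4 ^ β) * D ^ (2 * β) := by
      rw [Real.mul_rpow (by norm_num) (by positivity)]
      rw [← Real.rpow_natCast D 2, ← Real.rpow_mul hD0]
      ring_nf
    rw [hrw] at hmono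
    rw [ENNReal.ofReal_mul (by positivity)] at hmono
    have hD2β : ENNReal.ofReal (D ^ (2 * β)) = EMetric.diam s ^ (2 * β) := by
      rw [← ENNReal.ofReal_rpow_of_nonneg hD0 (by positivity)]
      rw [hD_def, ENNReal.ofReal_toReal hdiam_top]
    rw [hD2β] at hmono
    exact hmono
  -- Step 3: take cube roots to get a Frostman condition.
  set c : ℝ≥0∞ := c₁ ^ ((3:ℝ)⁻¹) with hc_def
  have hc0 : c ≠ 0 := by
    simp only [hc_def, ne_eq, ENNReal.rpow_eq_zero_iff, not_or]
    constructor
    · rintro ⟨h, _⟩; exact hc₁0 h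
    · rintro ⟨h, _⟩; exact hc₁top h
  have hctop : c ≠ ∞ := by
    simp only [hc_def, ne_eq, ENNReal.rpow_eq_top_iff, not_or]
    constructor
    · rintro ⟨h, _⟩; exact hc₁0 h
    · rintro ⟨h, _⟩; exact hc₁top h
  set d : ℝ := 2 * β * (3:ℝ)⁻¹ with hd_def
  have frostman : ∀ s : Set (ℝ × ℝ), EMetric.diam s ≤ 1 → μ s ≤ c * EMetric.diam s ^ d := by
    intro s hs
    rcases s.eq_empty_or_nonempty with rfl | hne
    · simp
    have h := set_bound s hne hs
    have h3 := ENNReal.rpow_le_rpow h (by norm_num : (0:ℝ) ≤ (3:ℝ)⁻¹)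
    rw [← ENNReal.rpow_mul, ENNReal.mul_rpow_of_nonneg _ _ (by norm_num : (0:ℝ) ≤ (3:ℝ)⁻¹),
      ← ENNReal.rpow_mul] at h3
    have h31 : (3:ℝ) * 3⁻¹ = 1 := by norm_num
    rw [h31, ENNReal.rpow_one] at h3
    exact h3
  -- Step 4: the rescaled measure is dominated by the Hausdorff measure.
  set ν : Measure (ℝ × ℝ) := c⁻¹ • μ with hν_def
  have hν_le : ν ≤ μH[d] := by
    apply Measure.le_hausdorffMeasure d ν 1 one_pos
    intro s hs
    have := frostman s hs
    calc ν s = c⁻¹ * μ s := by simp [hν_def]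
      _ ≤ c⁻¹ * (c * EMetric.diam s ^ d) := by
          exact mul_le_mul_right (frostman s hs) _
      _ = EMetric.diam s ^ d := by
          rw [← mul_assoc, ENNReal.inv_mul_cancel hc0 hctop, one_mul]
  -- Step 5: derive the contradiction.
  have hd_pos : (0:ℝ) < d := by rw [hd_def]; positivity
  have hdnn : d.toNNReal = d := Real.coe_toNNReal _ hd_pos.le
  have hH : μH[d] K = 0 := by
    have : dimH K < (d.toNNReal : ℝ≥0∞) := by
      rw [hdim]
      exact ENNReal.coe_pos.mpr (Real.toNNReal_pos.mpr hd_pos)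
    have := hausdorffMeasure_of_dimH_lt this
    rwa [hdnn] at this
  have hνK : ν K ≤ 0 := by
    calc ν K ≤ μH[d] K := hν_le K
      _ = 0 := hH
  have hμK1 : μ K = 0 := by
    have : c⁻¹ * μ K = 0 := le_antisymm (by simpa [hν_def] using hνK) zero_le
    rcases mul_eq_zero.mp this with h | h
    · exact absurd h (ENNReal.inv_ne_zero.mpr hctop)
    · exact h
  have : (1:ℝ≥0∞) ≤ 0 := by
    calc (1:ℝ≥0∞) = μ Set.univ := (measure_univ).symm
      _ ≤ μ K + μ Kᶜ := by
          rw [← Set.union_compl_self K]; exact measure_union_le _ _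
      _ = 0 := by rw [hμK1, hμK, add_zero]
  exact absurd this (by norm_num)
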